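/- Let A ∈ ℝ^{m×n} with m < n satisfy the URP, let G satisfy conditions (I)–(II), let b ∈ ℝᵐ, and let x be a solution of Aw = b of minimal ‖·‖₀, with k := ‖x‖₀ satisfying 2k ≤ m; set T = supp(x). Suppose the G Restricted Nullspace Property holds: for every w with Aw = b and ‖w‖₀ ≤ m, the vector h = x − w satisfies h = 0 or G(h_T) < G(h_{T^c}). Then every global minimizer of G over {w : Aw = b} equals x. -/

import Mathlib

open MeasureTheory Filter
open scoped BigOperators

noncomputable section

/-- `l0 w` is the number of nonzero entries of `w`. -/
def l0 {n : ℕ} (w : Fin n → ℝ) : ℕ := (Finset.univ.filter fun i => w i ≠ 0).card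

/-- Euclidean (`ℓ²`) norm of a vector. -/
def l2 {k : ℕ} (v : Fin k → ℝ) : ℝ := Real.sqrt (∑ i, v i ^ 2)

/-- Restriction `h_T` of a vector to a finset `T` (zero outside `T`). -/
def restr {n : ℕ} (T : Finset (Fin n)) (h : Fin n → ℝ) : Fin n → ℝ :=
  fun i => if i ∈ T then h i else 0

/-- Unique Representation Property: every `m` columns of `A` are linearly independent. -/
def URP {m n : ℕ} (A : Matrix (Fin m) (Fin n) ℝ) : Prop :=
  ∀ S : Finset (Fin n), S.card = m →
    LinearIndependent ℝ (fun j : S => (fun i : Fin m => A i (j : Fin n)))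

/-- Conditions (I)-(II) on the penalty component `g`. -/
def PenaltyConds (g : ℝ → ℝ) : Prop :=
  g 0 = 0 ∧ (∀ w, g (-w) = g w) ∧ Continuous g ∧
    ((StrictMonoOn g (Set.Ioi 0) ∧ StrictConcaveOn ℝ (Set.Ioi 0) g) ∨
      (∃ γ : ℝ, 0 < γ ∧ StrictMonoOn g (Set.Ioc 0 γ) ∧
        StrictConcaveOn ℝ (Set.Ioc 0 γ) g ∧ ∀ w, γ ≤ w → g w = g γ))

/-- Spectral (`ℓ² → ℓ²` operator) norm of a matrix. -/
def specNorm {m n : ℕ} (A : Matrix (Fin m) (Fin n) ℝ) : ℝ :=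
  sSup {c | ∃ v : Fin n → ℝ, l2 v ≤ 1 ∧ c = l2 (A.mulVec v)}

/-- The `p`-shrinkage function `s_{λ,p}`. -/
def pshrinkFun (lam p t : ℝ) : ℝ :=
  if t ≤ 0 then 0 else max (t - lam ^ (2 - p) * t ^ (p - 1)) 0

/-- `f_p(x) = ∫₀ˣ s_{λ,p}(t) dt`. -/
def pf (lam p x : ℝ) : ℝ := ∫ t in (0 : ℝ)..x, pshrinkFun lam p t

/-- Legendre–Fenchel transform `f_p*(w) = sup_{x ≥ 0} (x·w − f_p(x))`. -/
def pfstar (lam p w : ℝ) : ℝ := sSup ((fun x => x * w - pf lam p x) '' Set.Ici 0)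

/-- The induced `p`-shrinkage penalty component `g_p`. -/
def gp (lam p w : ℝ) : ℝ := (pfstar lam p |w| - w ^ 2 / 2) / lam

/-- The induced `p`-shrinkage penalty `G_p`. -/
def Gp (lam p : ℝ) {n : ℕ} (w : Fin n → ℝ) : ℝ := ∑ i, gp lam p (w i)

/-- The `p`-shrinkage mapping `S_p`. -/
def Sp (lam p : ℝ) {n : ℕ} (x : Fin n → ℝ) : Fin n → ℝ :=
  fun i => pshrinkFun lam p |x i| * Real.sign (x i)

/-- The objective `F_p(x) = λ G_p(x) + ½‖Ax − b‖₂²`. -/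
def Fp (lam p : ℝ) {m n : ℕ} (A : Matrix (Fin m) (Fin n) ℝ) (b : Fin m → ℝ)
    (x : Fin n → ℝ) : ℝ :=
  lam * Gp lam p x + (1 / 2) * (l2 (A.mulVec x - b)) ^ 2

/-- Firm-thresholding penalty component. -/
def gfirm (μ w : ℝ) : ℝ := if |w| ≤ μ then |w| - w ^ 2 / (2 * μ) else μ / 2

/-- Firm-thresholding penalty. -/
def Gfirm (μ : ℝ) {n : ℕ} (w : Fin n → ℝ) : ℝ := ∑ i, gfirm μ (w i)

/-- The `m × m` submatrix `A_S` of the columns of `A` indexed by `S`. -/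
def colsub {m n : ℕ} (A : Matrix (Fin m) (Fin n) ℝ)
    (S : {S : Finset (Fin n) // S.card = m}) : Matrix (Fin m) (Fin m) ℝ :=
  Matrix.of fun i j => A i ((S.1.orderIsoOfFin S.2 j : Fin n))

/-- `α_S = ‖A_S⁻¹ b‖_{-∞}`. -/
def alphaS {m n : ℕ} (A : Matrix (Fin m) (Fin n) ℝ) (b : Fin m → ℝ)
    (S : {S : Finset (Fin n) // S.card = m}) : ℝ :=
  ⨅ i, |((colsub A S)⁻¹).mulVec b i|

/-- `β_S = ‖A_S⁻¹ b‖_∞`. -/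
def betaS {m n : ℕ} (A : Matrix (Fin m) (Fin n) ℝ) (b : Fin m → ℝ)
    (S : {S : Finset (Fin n) // S.card = m}) : ℝ :=
  ⨆ i, |((colsub A S)⁻¹).mulVec b i|

/-- `‖A_S⁻¹‖` (spectral norm). -/
def nrmInv {m n : ℕ} (A : Matrix (Fin m) (Fin n) ℝ)
    (S : {S : Finset (Fin n) // S.card = m}) : ℝ :=
  specNorm ((colsub A S)⁻¹)


private lemma mono2_case2 {g : ℝ → ℝ} {γ : ℝ} (hγ : 0 < γ)
    (hm : StrictMonoOn g (Set.Ioc 0 γ))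
    (hconst : ∀ w, γ ≤ w → g w = g γ) :
    ∀ a b : ℝ, 0 < a → a ≤ b → g a ≤ g b := by
  intro a b ha hab
  by_cases hbγ : b ≤ γ
  · exact hm.monotoneOn ⟨ha, le_trans hab hbγ⟩ ⟨lt_of_lt_of_le ha hab, hbγ⟩ hab
  · push_neg at hbγ
    rw [hconst b hbγ.le]
    by_cases haγ : a ≤ γ
    · exact hm.monotoneOn ⟨ha, haγ⟩ ⟨hγ, le_refl γ⟩ haγ
    · push_neg at haγ
      rw [hconst a haγ.le]

private lemma concave_case2 {g : ℝ → ℝ} {γ : ℝ} (hγ : 0 < γ)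
    (hm : StrictMonoOn g (Set.Ioc 0 γ)) (hc : StrictConcaveOn ℝ (Set.Ioc 0 γ) g)
    (hconst : ∀ w, γ ≤ w → g w = g γ) :
    ConcaveOn ℝ (Set.Ioi 0) g := by
  have key : ∀ a b p q : ℝ, 0 < a → a ≤ b → 0 ≤ p → 0 ≤ q → p + q = 1 →
      p * g a + q * g b ≤ g (p * a + q * b) := by
    intro a b p q ha hab hp hq hpq
    by_cases hbγ : b ≤ γ
    · have := hc.concaveOn.2 (⟨ha, le_trans hab hbγ⟩ : a ∈ Set.Ioc 0 γ)
        (⟨lt_of_lt_of_le ha hab, hbγ⟩ : b ∈ Set.Ioc 0 γ) hp hq hpq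
      simpa [smul_eq_mul] using this
    · push_neg at hbγ
      have hgb : g b = g γ := hconst b hbγ.le
      have hgaγ : g a ≤ g γ := by
        by_cases haγ : a ≤ γ
        · exact hm.monotoneOn ⟨ha, haγ⟩ ⟨hγ, le_refl γ⟩ haγ
        · push_neg at haγ
          rw [hconst a haγ.le]
      have hca : a ≤ p * a + q * b := by nlinarith
      by_cases hcγ : γ ≤ p * a + q * b
      · rw [hconst _ hcγ, hgb]
        have h1 : p * g a ≤ p * g γ := mul_le_mul_of_nonneg_left hgaγ hp
        have h2 : p * g γ + q * g γ = g γ := by rw [← add_mul, hpq, one_mul]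
        linarith
      · push_neg at hcγ
        have hacγ : a < γ := lt_of_le_of_lt hca hcγ
        have hga0 : 0 < γ - a := by linarith
        set θ : ℝ := (γ - (p * a + q * b)) / (γ - a) with hθdef
        have hθ0 : 0 ≤ θ := div_nonneg (by linarith) hga0.le
        have hθ1 : θ ≤ 1 := by rw [hθdef, div_le_one hga0]; linarith
        have hθmul : θ * (γ - a) = γ - (p * a + q * b) := by
          rw [hθdef]; field_simp
        have hcomb : θ * a + (1 - θ) * γ = p * a + q * b := by nlinarith [hθmul]
        have hconcave := hc.concaveOn.2 (⟨ha, hacγ.le⟩ : a ∈ Set.Ioc 0 γ)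
          (⟨hγ, le_refl γ⟩ : γ ∈ Set.Ioc 0 γ) (show (0:ℝ) ≤ θ from hθ0)
          (show (0:ℝ) ≤ 1 - θ from by linarith) (show θ + (1 - θ) = 1 from by ring)
        simp only [smul_eq_mul] at hconcave
        rw [hcomb] at hconcave
        have hpθ : θ ≤ p := by
          rw [hθdef, div_le_iff₀ hga0]
          nlinarith [mul_le_mul_of_nonneg_left hbγ.le hq]
        have : p * g a + q * g γ ≤ θ * g a + (1 - θ) * g γ := by
          have h1 : (p - θ) * g a ≤ (p - θ) * g γ :=
            mul_le_mul_of_nonneg_left hgaγ (by linarith)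
          have h2 : p * g γ + q * g γ = g γ := by rw [← add_mul, hpq, one_mul]
          nlinarith [h1, h2]
        rw [hgb]; linarith
  refine ⟨convex_Ioi 0, fun a ha b hb p q hp hq hpq => ?_⟩
  simp only [smul_eq_mul]
  rcases le_total a b with hab | hab
  · exact key a b p q (Set.mem_Ioi.1 ha) hab hp hq hpq
  · have := key b a q p (Set.mem_Ioi.1 hb) hab hq hp (by linarith)
    calc p * g a + q * g b = q * g b + p * g a := by ring
      _ ≤ g (q * b + p * a) := this
      _ = g (p * a + q * b) := by rw [add_comm]

private lemma concaveOn_Ici_of_Ioi {g : ℝ → ℝ} (hcont : Continuous g) (h0 : g 0 = 0)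
    (h : ConcaveOn ℝ (Set.Ioi 0) g) : ConcaveOn ℝ (Set.Ici 0) g := by
  have aux : ∀ b p q : ℝ, 0 < b → 0 ≤ p → 0 ≤ q → p + q = 1 → q * g b ≤ g (q * b) := by
    intro b p q hb hp hq hpq
    have hev : ∀ ε : ℝ, ε ∈ Set.Ioi (0:ℝ) → p * g ε + q * g b ≤ g (p * ε + q * b) := by
      intro ε hε
      have := h.2 hε (Set.mem_Ioi.2 hb) hp hq hpq
      simpa [smul_eq_mul] using this
    have t1 : Tendsto (fun ε : ℝ => p * g ε + q * g b) (nhdsWithin 0 (Set.Ioi 0))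
        (nhds (q * g b)) := by
      have h1 : Tendsto (fun ε : ℝ => p * g ε + q * g b) (nhds 0)
          (nhds (p * g 0 + q * g b)) :=
        ((continuous_const.mul hcont).add continuous_const).tendsto 0
      rw [h0, mul_zero, zero_add] at h1
      exact h1.mono_left nhdsWithin_le_nhds
    have t2 : Tendsto (fun ε : ℝ => g (p * ε + q * b)) (nhdsWithin 0 (Set.Ioi 0))
        (nhds (g (q * b))) := by
      have h1 : Tendsto (fun ε : ℝ => g (p * ε + q * b)) (nhds 0)
          (nhds (g (p * 0 + q * b))) :=
        (hcont.comp ((continuous_const.mul continuous_id).add continuous_const)).tendsto 0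
      rw [mul_zero, zero_add] at h1
      exact h1.mono_left nhdsWithin_le_nhds
    exact le_of_tendsto_of_tendsto t1 t2 (eventually_mem_nhdsWithin.mono hev)
  refine ⟨convex_Ici 0, fun a ha b hb p q hp hq hpq => ?_⟩
  simp only [smul_eq_mul]
  rcases eq_or_lt_of_le (Set.mem_Ici.1 ha) with ha0 | ha0
  · rcases eq_or_lt_of_le (Set.mem_Ici.1 hb) with hb0 | hb0
    · rw [← ha0, ← hb0]
      simp [h0]
    · rw [← ha0]
      have := aux b p q hb0 hp hq hpq
      rw [mul_zero, zero_add, h0, mul_zero, zero_add]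
      exact this
  · rcases eq_or_lt_of_le (Set.mem_Ici.1 hb) with hb0 | hb0
    · rw [← hb0]
      have := aux a q p ha0 hq hp (by linarith)
      rw [mul_zero, add_zero, h0, mul_zero, add_zero]
      exact this
    · have := h.2 (Set.mem_Ioi.2 ha0) (Set.mem_Ioi.2 hb0) hp hq hpq
      simpa [smul_eq_mul] using this

private lemma nonneg_of_mono {g : ℝ → ℝ} (hcont : Continuous g) (h0 : g 0 = 0)
    (mono2 : ∀ a b : ℝ, 0 < a → a ≤ b → g a ≤ g b) : ∀ b : ℝ, 0 < b → 0 ≤ g b := by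
  intro b hb
  have hev : ∀ᶠ ε in nhdsWithin (0:ℝ) (Set.Ioi 0), g ε ≤ g b := by
    filter_upwards [Ioo_mem_nhdsGT_of_mem (Set.left_mem_Ico.2 hb)] with ε hε
    exact mono2 ε b hε.1 hε.2.le
  have ht : Tendsto g (nhdsWithin 0 (Set.Ioi 0)) (nhds 0) := by
    have := hcont.tendsto 0
    rw [h0] at this
    exact this.mono_left nhdsWithin_le_nhds
  exact le_of_tendsto ht hev

/-- the `G` Restricted Nullspace Property implies exact recovery. -/
theorem stmt4 {m n : ℕ} (hmn : m < n) (A : Matrix (Fin m) (Fin n) ℝ) (hA : URP A)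
    (g : ℝ → ℝ) (hg : PenaltyConds g) (b : Fin m → ℝ)
    (x : Fin n → ℝ) (hxf : A.mulVec x = b)
    (hxmin : ∀ w : Fin n → ℝ, A.mulVec w = b → l0 x ≤ l0 w)
    (hk : 2 * l0 x ≤ m)
    (T : Finset (Fin n)) (hT : T = Finset.univ.filter fun i => x i ≠ 0)
    (hRNSP : ∀ w : Fin n → ℝ, A.mulVec w = b → l0 w ≤ m →
      x - w = 0 ∨ (∑ i ∈ T, g ((x - w) i)) < ∑ i ∈ Tᶜ, g ((x - w) i))
    (xstar : Fin n → ℝ) (hfs : A.mulVec xstar = b)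
    (hmin : ∀ w : Fin n → ℝ, A.mulVec w = b → (∑ i, g (xstar i)) ≤ ∑ i, g (w i)) :
    xstar = x := by
  classical
  obtain ⟨hg0, heven, hcont, hcase⟩ := hg
  have hprops : (∀ a b : ℝ, 0 < a → a ≤ b → g a ≤ g b) ∧ ConcaveOn ℝ (Set.Ioi 0) g ∧
      ∃ δ : ℝ, 0 < δ ∧ StrictConcaveOn ℝ (Set.Ioc 0 δ) g := by
    rcases hcase with ⟨hm, hc⟩ | ⟨γ, hγ, hm, hc, hconst⟩
    · exact ⟨fun a b ha hab => hm.monotoneOn (Set.mem_Ioi.2 ha)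
        (Set.mem_Ioi.2 (lt_of_lt_of_le ha hab)) hab, hc.concaveOn,
        1, one_pos, hc.subset Set.Ioc_subset_Ioi_self (convex_Ioc 0 1)⟩
    · exact ⟨mono2_case2 hγ hm hconst, concave_case2 hγ hm hc hconst, γ, hγ, hc⟩
  obtain ⟨hmono2, hconcIoi, δ, hδ, hstrict⟩ := hprops
  have hconc : ConcaveOn ℝ (Set.Ici 0) g := concaveOn_Ici_of_Ioi hcont hg0 hconcIoi
  have hnnpos : ∀ c : ℝ, 0 < c → 0 ≤ g c := nonneg_of_mono hcont hg0 hmono2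
  have hmono : ∀ u w : ℝ, 0 ≤ u → u ≤ w → g u ≤ g w := by
    intro u w hu huw
    rcases eq_or_lt_of_le hu with h | h
    · rw [← h, hg0]
      rcases eq_or_lt_of_le (le_trans hu huw) with h2 | h2
      · rw [← h2, hg0]
      · exact hnnpos w h2
    · exact hmono2 u w h huw
  have habs : ∀ t : ℝ, g |t| = g t := by
    intro t
    rcases abs_cases t with ⟨h1, _⟩ | ⟨h1, _⟩
    · rw [h1]
    · rw [h1, heven]
  have hsign : ∀ s u : ℝ, (s = 1 ∨ s = -1) → g (s * u) = g u := by
    rintro s u (rfl | rfl)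
    · rw [one_mul]
    · rw [neg_one_mul, heven]
  have hsub : ∀ a c : ℝ, g (a + c) ≤ g a + g c := by
    intro a c
    rcases eq_or_lt_of_le (abs_nonneg a) with ha | ha
    · have ha0 : a = 0 := abs_eq_zero.1 ha.symm
      rw [ha0, zero_add, hg0]; linarith
    rcases eq_or_lt_of_le (abs_nonneg c) with hc | hc
    · have hc0 : c = 0 := abs_eq_zero.1 hc.symm
      rw [hc0, add_zero, hg0]; linarith
    have split : ∀ u w : ℝ, 0 < u → 0 < w → (u / (u + w)) * g (u + w) ≤ g u := by
      intro u w hu hw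
      have huw : 0 < u + w := by linarith
      have hcc := hconc.2 (Set.mem_Ici.2 huw.le) (Set.mem_Ici.2 (le_refl (0:ℝ)))
        (show (0:ℝ) ≤ u / (u + w) from by positivity)
        (show (0:ℝ) ≤ w / (u + w) from by positivity)
        (by field_simp)
      simp only [smul_eq_mul, mul_zero, add_zero, hg0] at hcc
      rw [show u / (u + w) * (u + w) = u from by field_simp] at hcc
      linarith
    have s1 := split |a| |c| ha hc
    have s2 := split |c| |a| hc ha
    rw [add_comm |c| |a|] at s2
    have hw : (|a| / (|a| + |c|) + |c| / (|a| + |c|)) * g (|a| + |c|) = g (|a| + |c|) := by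
      rw [← add_div, div_self (by linarith : |a| + |c| ≠ 0), one_mul]
    have h1 : g (|a| + |c|) ≤ g |a| + g |c| := by nlinarith [s1, s2, hw]
    calc g (a + c) = g |a + c| := (habs _).symm
      _ ≤ g (|a| + |c|) := hmono _ _ (abs_nonneg _) (abs_add_le a c)
      _ ≤ g |a| + g |c| := h1
      _ = g a + g c := by rw [habs, habs]
  -- Step 1: every global minimizer has at most m nonzero entries
  have hL0 : l0 xstar ≤ m := by
    by_contra hbig
    push_neg at hbig
    unfold l0 at hbig
    set S : Finset (Fin n) := Finset.univ.filter (fun i => xstar i ≠ 0) with hSdef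
    have hdep : ¬ LinearIndependent ℝ (fun j : S => (fun i : Fin m => A i (j : Fin n))) := by
      intro hli
      have h1 := hli.fintype_card_le_finrank
      rw [Module.finrank_fin_fun, Fintype.card_coe] at h1
      omega
    obtain ⟨c, hcsum, j0, hj0⟩ := Fintype.not_linearIndependent_iff.1 hdep
    set v : Fin n → ℝ := fun i => if h : i ∈ S then c ⟨i, h⟩ else 0 with hvdef
    have hvx : ∀ i, v i ≠ 0 → xstar i ≠ 0 := by
      intro i hvi hx
      apply hvi
      have hiS : i ∉ S := by simp [hSdef, hx]
      simp [hvdef, hiS]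
    have hAv : A.mulVec v = 0 := by
      funext r
      have hr := congrFun hcsum r
      simp only [Finset.sum_apply, Pi.smul_apply, smul_eq_mul, Pi.zero_apply] at hr
      show (∑ i : Fin n, A r i * v i) = 0
      rw [← Finset.sum_subset (Finset.subset_univ S) (fun i _ hiS => by
        simp [hvdef, hiS])]
      rw [← Finset.sum_coe_sort S (fun i => A r i * v i)]
      rw [← hr]
      refine Finset.sum_congr rfl fun jj _ => ?_
      rw [show v (jj : Fin n) = c jj from by simp [hvdef, jj.2]]
      ring
    have hfeas : ∀ t : ℝ, A.mulVec (fun i => xstar i + t * v i) = b := by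
      intro t
      have hxv : (fun i => xstar i + t * v i) = xstar + t • v := by
        funext i; simp
      rw [hxv, Matrix.mulVec_add, Matrix.mulVec_smul, hAv, hfs]
      simp
    set σ : Fin n → ℝ := fun i => if 0 ≤ xstar i then 1 else -1 with hσdef
    have hσpm : ∀ i, σ i = 1 ∨ σ i = -1 := by
      intro i
      by_cases h : 0 ≤ xstar i
      · left; simp [hσdef, h]
      · right; simp [hσdef, h]
    have hσx : ∀ i, σ i * xstar i = |xstar i| := by
      intro i
      by_cases h : 0 ≤ xstar i
      · simp [hσdef, h, abs_of_nonneg h]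
      · push_neg at h
        simp [hσdef, not_le.2 h, abs_of_neg h]
    have hσv : ∀ i, |σ i * v i| = |v i| := by
      intro i; rcases hσpm i with h | h <;> simp [h]
    clear_value σ
    clear hσdef
    have hSv : (Finset.univ.filter (fun i => v i ≠ 0)).Nonempty := by
      refine ⟨(j0 : Fin n), ?_⟩
      simp only [Finset.mem_filter, Finset.mem_univ, true_and]
      rw [show v (j0 : Fin n) = c j0 from by simp [hvdef, j0.2]]
      exact hj0
    clear_value S v
    clear hvdef hSdef hcsum hj0 hdep hbig
    obtain ⟨j, hjmem, hjmin⟩ := Finset.exists_min_image _ (fun i => |xstar i| / |v i|) hSv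
    have hvj : v j ≠ 0 := by
      have := Finset.mem_filter.1 hjmem
      exact this.2
    have hvj0 : 0 < |v j| := abs_pos.2 hvj
    have hxj : xstar j ≠ 0 := hvx j hvj
    have hxj0 : 0 < |xstar j| := abs_pos.2 hxj
    set tp : ℝ := |xstar j| / |v j| with htpdef
    have htp0 : 0 < tp := div_pos hxj0 hvj0
    have hxjv : |xstar j| = tp * |v j| := by rw [htpdef]; field_simp
    have hbound : ∀ i, v i ≠ 0 → tp * |v i| ≤ |xstar i| := by
      intro i hvi
      have h1 := hjmin i (by simp [hvi])
      have h2 : 0 < |v i| := abs_pos.2 hvi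
      rw [le_div_iff₀ h2] at h1
      linarith
    have hsgn : ∀ i, ∀ t : ℝ, |t| ≤ tp → 0 ≤ σ i * (xstar i + t * v i) := by
      intro i t ht
      by_cases hvi : v i = 0
      · rw [hvi, mul_zero, add_zero, hσx i]
        exact abs_nonneg _
      · have h1 : tp * |v i| ≤ |xstar i| := hbound i hvi
        have h2 : σ i * (xstar i + t * v i) = |xstar i| + t * (σ i * v i) := by
          rw [← hσx i]; ring
        have h3 : |t * (σ i * v i)| ≤ tp * |v i| := by
          rw [abs_mul, hσv i]
          exact mul_le_mul_of_nonneg_right ht (abs_nonneg _)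
        have h4 := neg_abs_le (t * (σ i * v i))
        rw [h2]
        linarith
    have gmid : ∀ s u1 u2 : ℝ, (s = 1 ∨ s = -1) → 0 ≤ s * u1 → 0 ≤ s * u2 →
        (g u1 + g u2) / 2 ≤ g ((u1 + u2) / 2) := by
      intro s u1 u2 hs h1 h2
      have key := hconc.2 (Set.mem_Ici.2 h1) (Set.mem_Ici.2 h2)
        (show (0:ℝ) ≤ 1/2 from by norm_num) (show (0:ℝ) ≤ 1/2 from by norm_num)
        (show (1:ℝ)/2 + 1/2 = 1 from by norm_num)
      simp only [smul_eq_mul] at key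
      rw [show (1/2:ℝ) * (s * u1) + 1/2 * (s * u2) = s * ((u1 + u2) / 2) from by ring] at key
      rw [hsign s u1 hs, hsign s u2 hs, hsign s ((u1 + u2) / 2) hs] at key
      linarith
    have hmid : ∀ (i : Fin n) (t1 t2 : ℝ), |t1| ≤ tp → |t2| ≤ tp →
        (g (xstar i + t1 * v i) + g (xstar i + t2 * v i)) / 2
          ≤ g (xstar i + ((t1 + t2) / 2) * v i) := by
      intro i t1 t2 h1 h2
      have h5 := gmid (σ i) (xstar i + t1 * v i) (xstar i + t2 * v i) (hσpm i)
        (hsgn i t1 h1) (hsgn i t2 h2)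
      rw [show ((xstar i + t1 * v i) + (xstar i + t2 * v i)) / 2
          = xstar i + ((t1 + t2) / 2) * v i from by ring] at h5
      exact h5
    have hPhi0 : ∀ t : ℝ, (∑ i, g (xstar i)) ≤ ∑ i, g (xstar i + t * v i) :=
      fun t => hmin _ (hfeas t)
    have hPhiconst : ∀ t : ℝ, |t| ≤ tp →
        (∑ i, g (xstar i + t * v i)) = ∑ i, g (xstar i) := by
      intro t ht
      have h1 := hPhi0 t
      have h2 := hPhi0 (-t)
      have h3 : ∀ i ∈ (Finset.univ : Finset (Fin n)),
          (g (xstar i + t * v i) + g (xstar i + (-t) * v i)) / 2 ≤ g (xstar i) := by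
        intro i _
        have h4 := hmid i t (-t) ht (by rwa [abs_neg])
        rw [show ((t + -t) / 2 : ℝ) = 0 from by ring, zero_mul, add_zero] at h4
        exact h4
      have h5 := Finset.sum_le_sum h3
      rw [← Finset.sum_div, Finset.sum_add_distrib] at h5
      linarith
    have hσvj : σ j * v j ≠ 0 := by
      rcases hσpm j with h | h <;> simp [h, hvj]
    set e : ℝ := -|xstar j| / (σ j * v j) with hedef
    have he_tp : |e| = tp := by
      rw [hedef, abs_div, abs_neg, abs_abs, hσv j, htpdef]
    have he_mul : (σ j * v j) * e = -|xstar j| := by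
      rw [hedef, mul_comm]; exact div_mul_cancel₀ _ hσvj
    have harg : ∀ t : ℝ, σ j * (xstar j + t * v j) = (σ j * v j) * (t - e) := by
      intro t
      have h1 := hσx j
      linear_combination h1 + he_mul
    have haj : ∀ s : ℝ, σ j * (xstar j + (e * (1 - s / tp)) * v j) = |v j| * s := by
      intro s
      rw [harg]
      have h2 : (σ j * v j) * (e * (1 - s / tp) - e) = |xstar j| * (s / tp) := by
        linear_combination (-(s / tp)) * he_mul
      rw [h2, hxjv]
      field_simp
    have hpmem : ∀ s : ℝ, 0 ≤ s → s ≤ tp → |e * (1 - s / tp)| ≤ tp := by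
      intro s h1 h2
      rw [abs_mul, he_tp]
      have h3 : |1 - s / tp| ≤ 1 := by
        rw [abs_le]
        constructor
        · have : s / tp ≤ 1 := by rw [div_le_one htp0]; exact h2
          linarith
        · have : 0 ≤ s / tp := div_nonneg h1 htp0.le
          linarith
      nlinarith
    set s2 : ℝ := min (δ / |v j|) tp with hs2def
    have hs2pos : 0 < s2 := lt_min (div_pos hδ hvj0) htp0
    have hs2tp : s2 ≤ tp := min_le_right _ _
    have ha2δ : |v j| * s2 ≤ δ := by
      have h1 : s2 ≤ δ / |v j| := min_le_left _ _
      rw [le_div_iff₀ hvj0] at h1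
      linarith
    have ha1pos : 0 < |v j| * (s2 / 2) := by positivity
    have ha2pos : 0 < |v j| * s2 := by positivity
    have halt : |v j| * (s2 / 2) < |v j| * s2 :=
      mul_lt_mul_of_pos_left (half_lt_self hs2pos) hvj0
    have ha1δ : |v j| * (s2 / 2) ≤ δ := le_trans halt.le ha2δ
    have hane : |v j| * (s2 / 2) ≠ |v j| * s2 := ne_of_lt halt
    have strict := hstrict.2 (⟨ha1pos, ha1δ⟩ : |v j| * (s2 / 2) ∈ Set.Ioc 0 δ)
      (⟨ha2pos, ha2δ⟩ : |v j| * s2 ∈ Set.Ioc 0 δ) hane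
      (show (0:ℝ) < 1/2 from by norm_num) (show (0:ℝ) < 1/2 from by norm_num)
      (show (1:ℝ)/2 + 1/2 = 1 from by norm_num)
    simp only [smul_eq_mul] at strict
    rw [show (1/2:ℝ) * (|v j| * (s2 / 2)) + 1/2 * (|v j| * s2)
        = |v j| * ((s2 / 2 + s2) / 2) from by ring] at strict
    set t1 : ℝ := e * (1 - (s2 / 2) / tp) with ht1def
    set t2 : ℝ := e * (1 - s2 / tp) with ht2def
    have ht1m : |t1| ≤ tp := hpmem (s2 / 2) (by linarith) (by linarith)
    have ht2m : |t2| ≤ tp := hpmem s2 hs2pos.le hs2tp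
    have htmid : (t1 + t2) / 2 = e * (1 - ((s2 / 2 + s2) / 2) / tp) := by
      rw [ht1def, ht2def]; ring
    have htmm : |(t1 + t2) / 2| ≤ tp := by
      rw [htmid]
      exact hpmem _ (by linarith) (by linarith)
    have haj1 := haj (s2 / 2)
    rw [← ht1def] at haj1
    have haj2 := haj s2
    rw [← ht2def] at haj2
    have hajm := haj ((s2 / 2 + s2) / 2)
    rw [← htmid] at hajm
    have hj1 : g (xstar j + t1 * v j) = g (|v j| * (s2 / 2)) := by
      rw [← hsign (σ j) (xstar j + t1 * v j) (hσpm j), haj1]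
    have hj2 : g (xstar j + t2 * v j) = g (|v j| * s2) := by
      rw [← hsign (σ j) (xstar j + t2 * v j) (hσpm j), haj2]
    have hjm : g (xstar j + ((t1 + t2) / 2) * v j) = g (|v j| * ((s2 / 2 + s2) / 2)) := by
      rw [← hsign (σ j) (xstar j + ((t1 + t2) / 2) * v j) (hσpm j), hajm]
    have hslt : (∑ i, (g (xstar i + t1 * v i) + g (xstar i + t2 * v i)) / 2)
        < ∑ i, g (xstar i + ((t1 + t2) / 2) * v i) :=
      Finset.sum_lt_sum (fun i _ => hmid i t1 t2 ht1m ht2m)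
        ⟨j, Finset.mem_univ j, by
          rw [hj1, hj2, hjm]
          linarith⟩
    rw [← Finset.sum_div, Finset.sum_add_distrib] at hslt
    rw [hPhiconst t1 ht1m, hPhiconst t2 ht2m, hPhiconst _ htmm] at hslt
    linarith
  -- Step 2: apply the restricted nullspace property
  rcases hRNSP xstar hfs hL0 with heq | hlt
  · funext i
    have h1 := congrFun heq i
    simp only [Pi.sub_apply, Pi.zero_apply] at h1
    linarith
  · exfalso
    have hTc0 : ∀ i ∈ Tᶜ, x i = 0 := by
      intro i hi
      rw [Finset.mem_compl, hT] at hi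
      simp only [Finset.mem_filter, Finset.mem_univ, true_and, not_not] at hi
      exact hi
    have e1 : ∑ i ∈ Tᶜ, g ((x - xstar) i) = ∑ i ∈ Tᶜ, g (xstar i) := by
      refine Finset.sum_congr rfl fun i hi => ?_
      rw [Pi.sub_apply, hTc0 i hi, zero_sub, heven]
    have e2 : ∀ i ∈ T, g (x i) ≤ g (xstar i) + g ((x - xstar) i) := by
      intro i _
      have hxi : x i = xstar i + (x - xstar) i := by rw [Pi.sub_apply]; ring
      rw [hxi]
      exact hsub _ _
    have e3 : ∑ i ∈ Tᶜ, g (x i) = 0 :=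
      Finset.sum_eq_zero fun i hi => by rw [hTc0 i hi, hg0]
    have e4 : ∑ i ∈ T, g (x i) ≤ ∑ i ∈ T, g (xstar i) + ∑ i ∈ T, g ((x - xstar) i) := by
      rw [← Finset.sum_add_distrib]
      exact Finset.sum_le_sum e2
    have e5 := Finset.sum_add_sum_compl T (fun i => g (x i))
    have e6 := Finset.sum_add_sum_compl T (fun i => g (xstar i))
    have e7 := hmin x hxf
    linarith [hlt, e1, e4, e3, e5, e6, e7]


end
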